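/- (i,j) off-by-ℓ repeated Zames–Falb ρ-hard IQC. Let f : ℝ → ℝ be a scalar admissible potential with derivative φ = f′. Let n ∈ ℕ, let i ≠ j be indices in {1,…,n}, let ρ ∈ (0,1], let ℓ ≥ 1 be a natural number, and let a ≥ 0 be a real constant. Let y : ℕ → ℝⁿ be any sequence with the convention y_m = 0 for m < 0, and set u_k^{(s)} = φ(y_k^{(s)}) for each coordinate s. Define d_k = u_k^{(i)}y_k^{(i)} + u_k^{(j)}y_k^{(j)}, c_k = u_k^{(j)}y_k^{(i)} + u_k^{(i)}y_k^{(j)}, and p_k = u_k^{(j)}y_{k−ℓ}^{(i)} + u_k^{(i)}y_{k−ℓ}^{(j)}. Then for every T ∈ ℕ: ∑_{k=0}^{T} ρ^{−2k} ( a·(d_k − c_k) + d_k − ρ^{2ℓ}·p_k ) ≥ 0. -/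

import Mathlib

private lemma zf_grad (f : ℝ → ℝ)
    (hconv : ConvexOn ℝ Set.univ f) (hdiff : Differentiable ℝ f)
    (φ : ℝ → ℝ) (hφ : ∀ x, φ x = deriv f x) :
    ∀ x z : ℝ, f x + φ x * (z - x) ≤ f z := by
  intro x z
  rw [hφ]
  rcases lt_trichotomy x z with h | h | h
  · have h1 := hconv.deriv_le_slope (Set.mem_univ x) (Set.mem_univ z) h (hdiff x)
    rw [slope_def_field] at h1
    have hz : 0 < z - x := by linarith
    rw [le_div_iff₀ hz] at h1
    linarith
  · subst h; simp
  · have h1 := hconv.slope_le_deriv (Set.mem_univ z) (Set.mem_univ x) h (hdiff x)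
    rw [slope_def_field] at h1
    have hz : 0 < x - z := by linarith
    rw [div_le_iff₀ hz] at h1
    linarith

/-- The `(i,j)` off-by-`ℓ` repeated Zames–Falb ρ-hard IQC (Appendix C), with
`a = |Γ_{ij}|`, for the repeated scalar nonlinearity `φ = f'` of a scalar
admissible potential `f`. -/
theorem stmt_16 (f : ℝ → ℝ)
    (hconv : ConvexOn ℝ Set.univ f) (hdiff : Differentiable ℝ f)
    (hnonneg : ∀ x, 0 ≤ f x) (hf0 : f 0 = 0)
    (φ : ℝ → ℝ) (hφ : ∀ x, φ x = deriv f x)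
    {n : ℕ} (i j : Fin n) (hij : i ≠ j)
    (ρ : ℝ) (hρ : ρ ∈ Set.Ioc (0 : ℝ) 1)
    (ℓ : ℕ) (hℓ : 1 ≤ ℓ) (a : ℝ) (ha : 0 ≤ a)
    (y : ℕ → Fin n → ℝ) (u : ℕ → Fin n → ℝ)
    (hu : ∀ k s, u k s = φ (y k s)) :
    ∀ T : ℕ, 0 ≤ ∑ k ∈ Finset.range (T + 1),
      ρ ^ (-(2 * (k : ℤ))) *
        (a * ((u k i * y k i + u k j * y k j) - (u k j * y k i + u k i * y k j))
          + (u k i * y k i + u k j * y k j)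
          - ρ ^ (2 * ℓ) * (u k j * (if ℓ ≤ k then y (k - ℓ) i else 0)
              + u k i * (if ℓ ≤ k then y (k - ℓ) j else 0))) := by
  obtain ⟨hρ0, hρ1⟩ := hρ
  have hkey := zf_grad f hconv hdiff φ hφ
  intro T
  set g : ℕ → ℝ := fun k => ρ ^ (-(2 * (k : ℤ))) * (f (y k i) + f (y k j)) with hg
  have hrpos : ∀ k : ℕ, (0:ℝ) < ρ ^ (-(2 * (k : ℤ))) := fun k => zpow_pos hρ0 _
  have hgnn : ∀ k, 0 ≤ g k := fun k =>
    mul_nonneg (hrpos k).le (by have := hnonneg (y k i); have := hnonneg (y k j); linarith)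
  have hq0 : (0:ℝ) ≤ ρ ^ (2 * ℓ) := pow_nonneg hρ0.le _
  have hq1 : ρ ^ (2 * ℓ) ≤ 1 := pow_le_one₀ hρ0.le hρ1
  -- per-term bound
  have hterm : ∀ k, g k - (if ℓ ≤ k then g (k - ℓ) else 0) ≤
      ρ ^ (-(2 * (k : ℤ))) *
        (a * ((u k i * y k i + u k j * y k j) - (u k j * y k i + u k i * y k j))
          + (u k i * y k i + u k j * y k j)
          - ρ ^ (2 * ℓ) * (u k j * (if ℓ ≤ k then y (k - ℓ) i else 0)
              + u k i * (if ℓ ≤ k then y (k - ℓ) j else 0))) := by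
    intro k
    have hui := hu k i
    have huj := hu k j
    set A := y k i
    set B := y k j
    set q := ρ ^ (2 * ℓ) with hqdef
    set r := ρ ^ (-(2 * (k : ℤ))) with hrdef
    have hr : (0:ℝ) < r := hrpos k
    -- basic scalar facts
    have P1A : f A ≤ φ A * A := by have := hkey A 0; rw [hf0] at this; nlinarith
    have P1B : f B ≤ φ B * B := by have := hkey B 0; rw [hf0] at this; nlinarith
    have P4 : 0 ≤ (φ A - φ B) * (A - B) := by
      have h1 := hkey A B; have h2 := hkey B A; nlinarith
    have hadc : 0 ≤ a * ((φ A * A + φ B * B) - (φ B * A + φ A * B)) := by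
      apply mul_nonneg ha; nlinarith [P4]
    by_cases hk : ℓ ≤ k
    · simp only [hk, if_true]
      set Yi := y (k - ℓ) i
      set Yj := y (k - ℓ) j
      have P2 : φ B * Yi ≤ f Yi + φ B * B - f B := by have := hkey B Yi; linarith
      have P3 : φ A * Yj ≤ f Yj + φ A * A - f A := by have := hkey A Yj; linarith
      -- scalar inequality
      have hscal : (f A + f B) - q * (f Yi + f Yj) ≤
          a * ((φ A * A + φ B * B) - (φ B * A + φ A * B))
            + (φ A * A + φ B * B) - q * (φ B * Yi + φ A * Yj) := by
        nlinarith [mul_le_mul_of_nonneg_left (add_le_add P2 P3) hq0,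
          mul_le_mul_of_nonneg_left (add_le_add P1A P1B) (sub_nonneg.2 hq1)]
      -- zpow identity : g (k - ℓ) = q * r * (f Yi + f Yj)
      have hz : g (k - ℓ) = q * r * (f Yi + f Yj) := by
        have hcast : ((k - ℓ : ℕ) : ℤ) = (k : ℤ) - (ℓ : ℤ) := by
          exact_mod_cast Int.ofNat_sub hk
        have : ρ ^ (-(2 * ((k - ℓ : ℕ) : ℤ))) = q * r := by
          rw [hcast, hqdef, hrdef, ← zpow_natCast ρ (2 * ℓ), ← zpow_add₀ hρ0.ne']
          congr 1
          push_cast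
          ring
        simp only [hg, this]
        rfl
      rw [hz]
      simp only [hg, hui, huj]
      have hmul := mul_le_mul_of_nonneg_left hscal hr.le
      linarith [hmul]
    · simp only [hk, if_false, sub_zero]
      simp only [hg, hui, huj]
      have hscal : f A + f B ≤
          a * ((φ A * A + φ B * B) - (φ B * A + φ A * B))
            + (φ A * A + φ B * B) - q * (φ B * 0 + φ A * 0) := by nlinarith
      have hmul := mul_le_mul_of_nonneg_left hscal hr.le
      linarith [hmul]
  -- sum the bound
  refine le_trans ?_ (Finset.sum_le_sum fun k _ => hterm k)
  rw [Finset.sum_sub_distrib]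
  -- evaluate the subtracted sum
  have h3 : ∑ k ∈ Finset.range (T + 1), (if ℓ ≤ k then g (k - ℓ) else 0)
      = ∑ m ∈ Finset.range (T + 1 - ℓ), g m := by
    rw [← Finset.sum_filter]
    have hfil : Finset.filter (fun k => ℓ ≤ k) (Finset.range (T + 1))
        = Finset.Ico ℓ (T + 1) := by
      ext k; simp [Finset.mem_Ico, and_comm]
    rw [hfil, Finset.sum_Ico_eq_sum_range]
    simp
  have h4 : ∑ m ∈ Finset.range (T + 1 - ℓ), g m ≤ ∑ k ∈ Finset.range (T + 1), g k := by
    apply Finset.sum_le_sum_of_subset_of_nonneg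
    · exact Finset.range_subset_range.2 (Nat.sub_le _ _)
    · exact fun k _ _ => hgnn k
  rw [h3]
  exact sub_nonneg.2 h4
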